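/- arXiv:2101.03978 — 3 statements merged into one kernel-verified Lean document; each statement's English description precedes it below -/
import Mathlib

section
/- Let ε > 0 and set b = ⌈n^ε⌉. For every cycle C of π, let t be the largest integer r with |E_r ∩ C| > b (with t = 0 if |C| ≤ b). Then t < 1/ε. -/
attribute [local instance] Classical.propDecidable

variable {n : ℕ}

/-- The first element of `E` encountered strictly after `x` when following `π` along its cycle
(`x` itself if no element of `E` is reachable).  For `E = E_r` this is the map `π_r`. -/
noncomputable def nextIn (π : Equiv.Perm (Fin n)) (E : Finset (Fin n)) (x : Fin n) : Fin n :=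
  if h : ∃ k, 0 < k ∧ (⇑π)^[k] x ∈ E then (⇑π)^[Nat.find h] x else x

/-- `b`-fold iteration of `nextIn`; for `E = E_r` this is `π_r^b`. -/
noncomputable def stepB (π : Equiv.Perm (Fin n)) (b : ℕ) (E : Finset (Fin n)) (x : Fin n) :
    Fin n :=
  (nextIn π E)^[b] x

/-- `level π b r` is the set `E_{r+1}` (0-indexed): `level π b 0 = E_1 = [n]`, and `E_{r+1}`
consists of the elements `i` of `E_r` with `i < π_r^k(i)` for all `k ∈ {−b,…,b} \ {0}`. -/
noncomputable def level (π : Equiv.Perm (Fin n)) (b : ℕ) : ℕ → Finset (Fin n)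
  | 0 => Finset.univ
  | r + 1 =>
    (level π b r).filter fun i =>
      (∀ k ∈ Finset.Icc 1 b, i < (nextIn π (level π b r))^[k] i) ∧
      (∀ k ∈ Finset.Icc 1 b, i < (nextIn π⁻¹ (level π b r))^[k] i)

/-- The cycle of `π` containing `x`, as a finset. -/
def cycleOfF (π : Equiv.Perm (Fin n)) (x : Fin n) : Finset (Fin n) :=
  (Finset.range n).image fun k => (⇑π)^[k] x

/-! ### Auxiliary lemmas -/

lemma aux_iter_mul_period {π : Equiv.Perm (Fin n)} {x : Fin n} {p : ℕ} (hpx : (⇑π)^[p] x = x)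
    (m : ℕ) : (⇑π)^[m * p] x = x := by
  induction m with
  | zero => simp
  | succ m ih => rw [Nat.succ_mul, Function.iterate_add_apply, hpx, ih]

lemma aux_exists_period (π : Equiv.Perm (Fin n)) (x : Fin n) :
    ∃ p, 0 < p ∧ p ≤ n ∧ (⇑π)^[p] x = x := by
  have : ¬ Function.Injective (fun k : Fin (n+1) => (⇑π)^[(k:ℕ)] x) := by
    intro h
    have := Fintype.card_le_of_injective _ h
    simp at this
  rw [Function.not_injective_iff] at this
  obtain ⟨i, j, hij, hne⟩ := this
  wlog h : (j:ℕ) < (i:ℕ) generalizing i j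
  · refine this j i hij.symm (Ne.symm hne) ?_
    rcases Nat.lt_or_ge (i:ℕ) (j:ℕ) with h|h
    · exact h
    · exact absurd (Fin.ext (by omega : (i:ℕ) = j)) hne
  refine ⟨(i:ℕ) - j, by omega, by omega, ?_⟩
  have h2 : (⇑π)^[(j:ℕ) + ((i:ℕ) - j)] x = (⇑π)^[(j:ℕ)] x := by
    rw [(by omega : (j:ℕ) + ((i:ℕ) - j) = (i:ℕ))]; exact hij
  rw [Function.iterate_add_apply] at h2
  exact (π.injective.iterate (j:ℕ)) h2

lemma aux_mem_cycleOfF_iff {π : Equiv.Perm (Fin n)} {x y : Fin n} :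
    y ∈ cycleOfF π x ↔ ∃ k, (⇑π)^[k] x = y := by
  constructor
  · rintro hy
    simp only [cycleOfF, Finset.mem_image, Finset.mem_range] at hy
    obtain ⟨k, _, hk⟩ := hy
    exact ⟨k, hk⟩
  · rintro ⟨k, hk⟩
    obtain ⟨p, hp, hpn, hpx⟩ := aux_exists_period π x
    simp only [cycleOfF, Finset.mem_image, Finset.mem_range]
    refine ⟨k % p, lt_of_lt_of_le (Nat.mod_lt _ hp) hpn, ?_⟩
    conv_rhs => rw [← hk, ← Nat.mod_add_div k p, Function.iterate_add_apply,
      Nat.mul_comm p (k / p), aux_iter_mul_period hpx]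

lemma aux_cycleOfF_closed_pi {π : Equiv.Perm (Fin n)} {x y : Fin n} (hy : y ∈ cycleOfF π x) :
    π y ∈ cycleOfF π x := by
  obtain ⟨k, hk⟩ := aux_mem_cycleOfF_iff.mp hy
  exact aux_mem_cycleOfF_iff.mpr ⟨k + 1, by rw [Function.iterate_succ_apply', hk]⟩

lemma aux_cycleOfF_closed_iter {π : Equiv.Perm (Fin n)} {x y : Fin n} (hy : y ∈ cycleOfF π x)
    (k : ℕ) : (⇑π)^[k] y ∈ cycleOfF π x := by
  induction k with
  | zero => exact hy
  | succ k ih => rw [Function.iterate_succ_apply']; exact aux_cycleOfF_closed_pi ih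

lemma aux_exists_period_mem {π : Equiv.Perm (Fin n)} {x y : Fin n} (hy : y ∈ cycleOfF π x) :
    ∃ p, 0 < p ∧ (⇑π)^[p] y = y := by
  obtain ⟨p, hp, _, hpx⟩ := aux_exists_period π x
  obtain ⟨k, hk⟩ := aux_mem_cycleOfF_iff.mp hy
  refine ⟨p, hp, ?_⟩
  rw [← hk, ← Function.iterate_add_apply, Nat.add_comm, Function.iterate_add_apply, hpx]

lemma aux_reach_of_mem {π : Equiv.Perm (Fin n)} {x y z : Fin n} (hy : y ∈ cycleOfF π x)
    (hz : z ∈ cycleOfF π x) : ∃ k, 0 < k ∧ (⇑π)^[k] y = z := by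
  obtain ⟨p, hp, hpy⟩ := aux_exists_period_mem hy
  obtain ⟨a, ha⟩ := aux_mem_cycleOfF_iff.mp hy
  obtain ⟨c, hc⟩ := aux_mem_cycleOfF_iff.mp hz
  have hx : (⇑π)^[(a+1)*p - a] y = x := by
    apply π.injective.iterate a
    have h3 : a + 1 ≤ (a+1)*p := Nat.le_mul_of_pos_right _ hp
    rw [← Function.iterate_add_apply, (by omega : a + ((a+1)*p - a) = (a+1)*p),
      aux_iter_mul_period hpy, ha]
  refine ⟨c + ((a+1)*p - a) + p, by omega, ?_⟩
  rw [Function.iterate_add_apply, hpy, Function.iterate_add_apply, hx, hc]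

lemma aux_inv_iter_iter (π : Equiv.Perm (Fin n)) (k : ℕ) (z : Fin n) :
    (⇑π⁻¹)^[k] ((⇑π)^[k] z) = z := by
  induction k with
  | zero => rfl
  | succ k ih =>
    rw [Function.iterate_succ_apply' (⇑π), Function.iterate_succ_apply (⇑π⁻¹),
      (show π⁻¹ (π ((⇑π)^[k] z)) = (⇑π)^[k] z from Equiv.symm_apply_apply _ _), ih]

section withC
variable {π : Equiv.Perm (Fin n)} {E C : Finset (Fin n)}
  (hiter : ∀ y ∈ C, ∀ k : ℕ, (⇑π)^[k] y ∈ C)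
  (hreach : ∀ y ∈ C, ∀ z ∈ C, ∃ k, 0 < k ∧ (⇑π)^[k] y = z)

include hiter hreach in
lemma aux_nextIn_mem {y : Fin n} (hy : y ∈ C) {z : Fin n} (hzE : z ∈ E) (hzC : z ∈ C) :
    nextIn π E y ∈ E ∧ nextIn π E y ∈ C := by
  have h : ∃ k, 0 < k ∧ (⇑π)^[k] y ∈ E := by
    obtain ⟨k, hk, hke⟩ := hreach y hy z hzC
    exact ⟨k, hk, hke ▸ hzE⟩
  rw [nextIn, dif_pos h]
  exact ⟨(Nat.find_spec h).2, hiter y hy _⟩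

include hreach in
lemma aux_nextIn_inv_nextIn {y : Fin n} (hy : y ∈ C) (hyE : y ∈ E) :
    nextIn π⁻¹ E (nextIn π E y) = y := by
  have h : ∃ k, 0 < k ∧ (⇑π)^[k] y ∈ E := by
    obtain ⟨k, hk, hke⟩ := hreach y hy y hy
    exact ⟨k, hk, by rw [hke]; exact hyE⟩
  have hval : nextIn π E y = (⇑π)^[Nat.find h] y := dif_pos h
  rw [hval]
  set m := Nat.find h with hm
  have hm0 : 0 < m := (Nat.find_spec h).1
  have key : ∀ j ≤ m, (⇑π⁻¹)^[j] ((⇑π)^[m] y) = (⇑π)^[m - j] y := by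
    intro j hj
    conv_lhs => rw [(by omega : m = j + (m - j)), Function.iterate_add_apply]
    exact aux_inv_iter_iter π j _
  have h' : ∃ j, 0 < j ∧ (⇑π⁻¹)^[j] ((⇑π)^[m] y) ∈ E := by
    refine ⟨m, hm0, ?_⟩
    rw [key m le_rfl]; simpa using hyE
  have hval' : nextIn π⁻¹ E ((⇑π)^[m] y) = (⇑π⁻¹)^[Nat.find h'] ((⇑π)^[m] y) := dif_pos h'
  rw [hval']
  have hfind : Nat.find h' = m := by
    rw [Nat.find_eq_iff]
    refine ⟨⟨hm0, by rw [key m le_rfl]; simpa using hyE⟩, ?_⟩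
    intro j hj ⟨hj0, hjE⟩
    rw [key j hj.le] at hjE
    exact Nat.find_min h (by omega : m - j < m) ⟨by omega, hjE⟩
  rw [hfind, key m le_rfl]; simp

include hiter hreach in
lemma aux_nextIn_iter_mem {y : Fin n} (hy : y ∈ E ∩ C) (k : ℕ) :
    (nextIn π E)^[k] y ∈ E ∩ C := by
  induction k with
  | zero => exact hy
  | succ k ih =>
    rw [Function.iterate_succ_apply']
    simp only [Finset.mem_inter] at ih ⊢
    have := aux_nextIn_mem hiter hreach ih.2 ih.1 ih.2
    exact ⟨this.1, this.2⟩

include hiter hreach in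
lemma aux_inv_iter_nextIn_iter {y : Fin n} (hy : y ∈ E ∩ C) (k : ℕ) :
    (nextIn π⁻¹ E)^[k] ((nextIn π E)^[k] y) = y := by
  induction k with
  | zero => rfl
  | succ k ih =>
    rw [Function.iterate_succ_apply' (nextIn π E), Function.iterate_succ_apply (nextIn π⁻¹ E)]
    have hmem := aux_nextIn_iter_mem hiter hreach hy k
    simp only [Finset.mem_inter] at hmem
    rw [aux_nextIn_inv_nextIn hreach hmem.2 hmem.1, ih]

variable {b : ℕ}

include hiter hreach in
lemma aux_sep_lemma {i i' : Fin n} (hi : i ∈ E ∩ C) (hi' : i' ∈ E ∩ C)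
    (h2 : ∀ k ∈ Finset.Icc 1 b, i < (nextIn π⁻¹ E)^[k] i)
    (h1' : ∀ k ∈ Finset.Icc 1 b, i' < (nextIn π E)^[k] i')
    {k j : ℕ} (hk : k ≤ j) (hj : j ≤ b)
    (heq : (nextIn π E)^[k] i = (nextIn π E)^[j] i') : i = i' ∧ k = j := by
  set f := nextIn π E
  set g := nextIn π⁻¹ E
  have hsplit : f^[j] i' = f^[k] (f^[j - k] i') := by
    rw [← Function.iterate_add_apply, (by omega : k + (j - k) = j)]
  have hmem : f^[j - k] i' ∈ E ∩ C := aux_nextIn_iter_mem hiter hreach hi' _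
  have hd : i = f^[j - k] i' := by
    have := congrArg (g^[k]) heq
    rwa [aux_inv_iter_nextIn_iter hiter hreach hi, hsplit,
      aux_inv_iter_nextIn_iter hiter hreach hmem] at this
  rcases Nat.eq_or_lt_of_le hk with h | h
  · exact ⟨by rw [hd, ← h, Nat.sub_self]; rfl, h⟩
  · exfalso
    have hd1 : j - k ∈ Finset.Icc 1 b := Finset.mem_Icc.mpr ⟨by omega, by omega⟩
    have hlt1 : i' < i := by rw [hd]; exact h1' _ hd1
    have hgd : g^[j - k] i = i' := by
      rw [hd]; exact aux_inv_iter_nextIn_iter hiter hreach hi' _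
    have hlt2 : i < i' := by rw [← hgd]; exact h2 _ hd1
    exact absurd hlt2 hlt1.asymm

include hiter hreach in
lemma aux_counting_lemma (S : Finset (Fin n)) (hS : S ⊆ E ∩ C)
    (h1 : ∀ i ∈ S, ∀ k ∈ Finset.Icc 1 b, i < (nextIn π E)^[k] i)
    (h2 : ∀ i ∈ S, ∀ k ∈ Finset.Icc 1 b, i < (nextIn π⁻¹ E)^[k] i) :
    (b + 1) * S.card ≤ (E ∩ C).card := by
  classical
  set f := nextIn π E
  set T : Fin n → Finset (Fin n) := fun i => (Finset.range (b+1)).image (fun k => f^[k] i)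
  have hTsub : ∀ i ∈ S, T i ⊆ E ∩ C := by
    intro i hi a ha
    simp only [T, Finset.mem_image, Finset.mem_range] at ha
    obtain ⟨k, _, rfl⟩ := ha
    exact aux_nextIn_iter_mem hiter hreach (hS hi) k
  have hTcard : ∀ i ∈ S, (T i).card = b + 1 := by
    intro i hi
    rw [Finset.card_image_of_injOn, Finset.card_range]
    intro k hk j hj heq
    simp only [Finset.coe_range, Set.mem_Iio] at hk hj
    rcases le_total k j with h | h
    · exact (aux_sep_lemma hiter hreach (hS hi) (hS hi) (h2 i hi) (h1 i hi) h (by omega) heq).2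
    · exact ((aux_sep_lemma hiter hreach (hS hi) (hS hi) (h2 i hi) (h1 i hi) h (by omega)
        heq.symm).2).symm
  have hdisj : ∀ i ∈ S, ∀ i' ∈ S, i ≠ i' → Disjoint (T i) (T i') := by
    intro i hi i' hi' hne
    rw [Finset.disjoint_left]
    intro a ha ha'
    simp only [T, Finset.mem_image, Finset.mem_range] at ha ha'
    obtain ⟨k, hk, rfl⟩ := ha
    obtain ⟨j, hj, heq⟩ := ha'
    rcases le_total j k with h | h
    · exact hne ((aux_sep_lemma hiter hreach (hS hi') (hS hi) (h2 i' hi') (h1 i hi) h (by omega)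
        heq).1).symm
    · exact hne (aux_sep_lemma hiter hreach (hS hi) (hS hi') (h2 i hi) (h1 i' hi') h (by omega)
        heq.symm).1
  calc (b + 1) * S.card = ∑ i ∈ S, (T i).card := by
        rw [Finset.sum_congr rfl hTcard, Finset.sum_const, smul_eq_mul, Nat.mul_comm]
    _ = (S.biUnion T).card := (Finset.card_biUnion hdisj).symm
    _ ≤ (E ∩ C).card := Finset.card_le_card (Finset.biUnion_subset.mpr hTsub)

end withC

/-- The key geometric decay: each level intersected with a cycle shrinks by a factor `b+1`. -/
lemma aux_level_decay (π : Equiv.Perm (Fin n)) (x : Fin n) (b r : ℕ) :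
    (b + 1) * ((level π b (r+1)) ∩ cycleOfF π x).card ≤
      ((level π b r) ∩ cycleOfF π x).card := by
  set C := cycleOfF π x
  have hiter : ∀ y ∈ C, ∀ k : ℕ, (⇑π)^[k] y ∈ C := fun y hy k => aux_cycleOfF_closed_iter hy k
  have hreach : ∀ y ∈ C, ∀ z ∈ C, ∃ k, 0 < k ∧ (⇑π)^[k] y = z :=
    fun y hy z hz => aux_reach_of_mem hy hz
  apply aux_counting_lemma hiter hreach
  · intro i hi
    rw [Finset.mem_inter] at hi ⊢
    refine ⟨?_, hi.2⟩
    have h := hi.1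
    simp only [level, Finset.mem_filter] at h
    exact h.1
  · intro i hi
    rw [Finset.mem_inter] at hi
    have h := hi.1
    simp only [level, Finset.mem_filter] at h
    exact h.2.1
  · intro i hi
    rw [Finset.mem_inter] at hi
    have h := hi.1
    simp only [level, Finset.mem_filter] at h
    exact h.2.2

lemma aux_level_pow (π : Equiv.Perm (Fin n)) (x : Fin n) (b : ℕ) (r : ℕ) :
    (b + 1) ^ r * ((level π b r) ∩ cycleOfF π x).card ≤ (cycleOfF π x).card := by
  induction r with
  | zero => simpa [level] using Finset.card_le_card (Finset.inter_subset_right)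
  | succ r ih =>
    calc (b+1)^(r+1) * ((level π b (r+1)) ∩ cycleOfF π x).card
        = (b+1)^r * ((b+1) * ((level π b (r+1)) ∩ cycleOfF π x).card) := by ring
      _ ≤ (b+1)^r * ((level π b r) ∩ cycleOfF π x).card :=
          Nat.mul_le_mul_left _ (aux_level_decay π x b r)
      _ ≤ (cycleOfF π x).card := ih

/-- Let `ε > 0` and `b = ⌈n^ε⌉`.  For every cycle `C` of `π`, let `t` be the
largest integer `r` with `|E_r ∩ C| > b` (with `t = 0` if `|C| ≤ b`; here `E_r = level π b (r-1)`
since `level` is 0-indexed).  Then `t < 1/ε`. -/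
theorem largest_big_level_lt (n : ℕ) (ε : ℝ) (hε : 0 < ε) (b : ℕ)
    (hb : b = ⌈(n : ℝ) ^ ε⌉₊)
    (π : Equiv.Perm (Fin n)) (x : Fin n) (C : Finset (Fin n)) (hC : C = cycleOfF π x)
    (t : ℕ)
    (ht0 : C.card ≤ b → t = 0)
    (ht1 : t ≠ 0 → b < ((level π b (t - 1)) ∩ C).card)
    (ht2 : ∀ r, t < r → ¬ b < ((level π b (r - 1)) ∩ C).card) :
    (t : ℝ) < 1 / ε := by
  rcases Nat.eq_zero_or_pos t with ht | ht
  · rw [ht]; push_cast; positivity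
  have hn : 0 < n := Fin.pos x
  -- b ≥ 1
  have hrpos : (0:ℝ) < (n:ℝ) ^ ε := Real.rpow_pos_of_pos (by exact_mod_cast hn) ε
  have hb1 : 1 ≤ b := by
    rw [hb]
    exact Nat.one_le_iff_ne_zero.mpr (by positivity)
  -- (b+1)^t ≤ n
  have hct : b + 1 ≤ ((level π b (t - 1)) ∩ C).card := ht1 (by omega)
  have hpow : (b + 1) ^ t ≤ n := by
    have h1 := aux_level_pow π x b (t - 1)
    rw [← hC] at h1
    calc (b+1)^t = (b+1)^(t-1) * (b+1) := by
          rw [← pow_succ, (by omega : t - 1 + 1 = t)]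
      _ ≤ (b+1)^(t-1) * ((level π b (t - 1)) ∩ C).card := Nat.mul_le_mul_left _ hct
      _ ≤ C.card := h1
      _ ≤ n := by
          rw [hC]
          calc (cycleOfF π x).card ≤ Finset.univ.card := Finset.card_le_univ _
            _ = n := by simp
  -- hence n ≥ 2^t ≥ 2, so (n:ℝ) > 1
  have hn2 : 2 ≤ n := by
    calc 2 = 2^1 := rfl
      _ ≤ (b+1)^t := Nat.pow_le_pow_left (by omega) 1 |>.trans (Nat.pow_le_pow_right (by omega) ht)
      _ ≤ n := hpow
  have hn1 : (1:ℝ) < (n:ℝ) := by exact_mod_cast by omega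
  -- real inequality chain
  have hceil : (n:ℝ) ^ ε ≤ (b:ℝ) := by rw [hb]; exact Nat.le_ceil _
  have hchain : (n:ℝ) ^ (ε * t) < (n:ℝ) ^ (1:ℝ) := by
    rw [Real.rpow_one]
    calc (n:ℝ) ^ (ε * t) = ((n:ℝ) ^ ε) ^ (t:ℕ) := by
          rw [← Real.rpow_natCast ((n:ℝ)^ε) t, ← Real.rpow_mul (by positivity)]
      _ ≤ (b:ℝ) ^ (t:ℕ) := pow_le_pow_left₀ hrpos.le hceil t
      _ < ((b:ℝ) + 1) ^ (t:ℕ) := by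
          apply pow_lt_pow_left₀ (by linarith) (by positivity) (by omega)
      _ ≤ (n:ℝ) := by exact_mod_cast hpow
  have hεt : ε * t < 1 := (Real.rpow_lt_rpow_left_iff hn1).mp hchain
  rw [lt_div_iff₀ hε, mul_comm]
  exact hεt
end

section
/- On every cycle C of π there is exactly one leader, i.e., exactly one element i ∈ C such that the best b-staircase from i exists and its middle is the minimum element of C. -/
attribute [local instance] Classical.propDecidable

variable {n : ℕ}

open Function


lemma inv_iter_iter (σ : Equiv.Perm (Fin n)) (m : ℕ) (w : Fin n) :
    (⇑σ⁻¹)^[m] ((⇑σ)^[m] w) = w := by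
  induction m with
  | zero => rfl
  | succ k ih => rw [iterate_succ_apply, iterate_succ_apply', (show ∀ z, σ⁻¹ (σ z) = z from σ.symm_apply_apply), ih]

lemma iter_inv_iter (σ : Equiv.Perm (Fin n)) (m : ℕ) (w : Fin n) :
    (⇑σ)^[m] ((⇑σ⁻¹)^[m] w) = w := by
  have := inv_iter_iter σ⁻¹ m w; simpa using this

lemma iter_injective (σ : Equiv.Perm (Fin n)) (m : ℕ) : Function.Injective ((⇑σ)^[m]) :=
  Function.Injective.iterate σ.injective m

/-- every point has a period `0 < L ≤ n` -/
lemma exists_period (σ : Equiv.Perm (Fin n)) (y : Fin n) (hn : 0 < n) :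
    ∃ L, 0 < L ∧ L ≤ n ∧ (⇑σ)^[L] y = y := by
  have : ¬ Function.Injective (fun k : Fin (n+1) => (⇑σ)^[(k : ℕ)] y) := by
    intro h
    have := Fintype.card_le_of_injective _ h
    simp at this
  rw [Function.not_injective_iff] at this
  obtain ⟨a, b, hab, hne⟩ := this
  have key : ∀ (a b : Fin (n+1)), (a:ℕ) < (b:ℕ) →
      (⇑σ)^[(a:ℕ)] y = (⇑σ)^[(b:ℕ)] y → ∃ L, 0 < L ∧ L ≤ n ∧ (⇑σ)^[L] y = y := by
    intro a b h hab
    refine ⟨(b:ℕ) - a, by omega, by omega, ?_⟩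
    have h2 : (⇑σ)^[(a:ℕ)] ((⇑σ)^[(b:ℕ) - a] y) = (⇑σ)^[(a:ℕ)] y := by
      rw [← iterate_add_apply]
      rw [show (a:ℕ) + ((b:ℕ) - a) = (b:ℕ) by omega]
      exact hab.symm
    exact iter_injective σ a h2
  rcases lt_or_gt_of_ne (fun h => hne (by exact_mod_cast h)) with h | h
  · exact key a b h hab
  · exact key b a h hab.symm

lemma iter_mod_period {σ : Equiv.Perm (Fin n)} {y : Fin n} {L : ℕ} (hL : (⇑σ)^[L] y = y)
    (k : ℕ) : (⇑σ)^[k] y = (⇑σ)^[k % L] y := by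
  conv_lhs => rw [← Nat.mod_add_div k L]
  rw [iterate_add_apply, iterate_mul]
  rw [iterate_fixed hL]

lemma mem_cycleOfF_iff {σ : Equiv.Perm (Fin n)} {z y : Fin n} (hn : 0 < n) :
    y ∈ cycleOfF σ z ↔ ∃ k, (⇑σ)^[k] z = y := by
  constructor
  · rintro h
    simp only [cycleOfF, Finset.mem_image, Finset.mem_range] at h
    obtain ⟨k, _, hk⟩ := h
    exact ⟨k, hk⟩
  · rintro ⟨k, hk⟩
    obtain ⟨L, hL0, hLn, hL⟩ := exists_period σ z hn
    simp only [cycleOfF, Finset.mem_image, Finset.mem_range]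
    exact ⟨k % L, lt_of_lt_of_le (Nat.mod_lt _ hL0) hLn, by rw [← iter_mod_period hL k]; exact hk⟩

lemma mem_cycleOfF_self (σ : Equiv.Perm (Fin n)) (x : Fin n) (hn : 0 < n) :
    x ∈ cycleOfF σ x := (mem_cycleOfF_iff hn).2 ⟨0, rfl⟩

lemma cycle_closed_iter {σ : Equiv.Perm (Fin n)} {x y : Fin n} (hn : 0 < n)
    (h : y ∈ cycleOfF σ x) (m : ℕ) : (⇑σ)^[m] y ∈ cycleOfF σ x := by
  rw [mem_cycleOfF_iff hn] at h ⊢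
  obtain ⟨k, rfl⟩ := h
  exact ⟨m + k, by rw [iterate_add_apply]⟩

lemma cycle_trans {σ : Equiv.Perm (Fin n)} {x y z : Fin n} (hn : 0 < n)
    (hy : y ∈ cycleOfF σ x) (hz : z ∈ cycleOfF σ x) : ∃ k, (⇑σ)^[k] y = z := by
  rw [mem_cycleOfF_iff hn] at hy hz
  obtain ⟨a, ha⟩ := hy
  obtain ⟨c, hc⟩ := hz
  obtain ⟨L, hL0, _, hL⟩ := exists_period σ x hn
  refine ⟨c + a * (L - 1), ?_⟩
  have h1 : c + a * (L - 1) + a = c + a * L := by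
    have : L - 1 + 1 = L := by omega
    calc c + a * (L - 1) + a = c + a * (L - 1 + 1) := by ring
    _ = c + a * L := by rw [this]
  rw [← ha, ← iterate_add_apply, h1, iterate_add_apply, Nat.mul_comm, iterate_mul, iterate_fixed hL, hc]

lemma cycleOfF_eq_of_mem {σ : Equiv.Perm (Fin n)} {x y : Fin n} (hn : 0 < n)
    (h : y ∈ cycleOfF σ x) : cycleOfF σ y = cycleOfF σ x := by
  ext z
  rw [mem_cycleOfF_iff hn, mem_cycleOfF_iff hn]
  constructor
  · rintro ⟨k, rfl⟩
    rw [mem_cycleOfF_iff hn] at h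
    obtain ⟨a, rfl⟩ := h
    exact ⟨k + a, by rw [iterate_add_apply]⟩
  · rintro ⟨k, rfl⟩
    exact cycle_trans hn h (cycle_closed_iter hn (mem_cycleOfF_self σ x hn) k)

lemma exists_inv_iter_eq (σ : Equiv.Perm (Fin n)) (x : Fin n) (hn : 0 < n) (k : ℕ) :
    ∃ m, (⇑σ⁻¹)^[m] x = (⇑σ)^[k] x := by
  obtain ⟨L, hL0, _, hL⟩ := exists_period σ⁻¹ x hn
  refine ⟨L * k - k, ?_⟩
  apply iter_injective σ⁻¹ k
  rw [← iterate_add_apply, show k + (L * k - k) = L * k by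
    have := Nat.le_mul_of_pos_left k hL0; omega]
  rw [iterate_mul, iterate_fixed hL, inv_iter_iter]

lemma cycleOfF_inv (σ : Equiv.Perm (Fin n)) (x : Fin n) (hn : 0 < n) :
    cycleOfF σ⁻¹ x = cycleOfF σ x := by
  ext z
  rw [mem_cycleOfF_iff hn, mem_cycleOfF_iff hn]
  constructor
  · rintro ⟨k, rfl⟩
    obtain ⟨m, hm⟩ := exists_inv_iter_eq σ⁻¹ x hn k
    exact ⟨m, by simpa using hm⟩
  · rintro ⟨k, rfl⟩
    exact exists_inv_iter_eq σ x hn k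

-- generic mod-period lemma
lemma iterate_mod {α : Type*} {f : α → α} {y : α} {L : ℕ} (hL : f^[L] y = y) (k : ℕ) :
    f^[k] y = f^[k % L] y := by
  conv_lhs => rw [← Nat.mod_add_div k L]
  rw [iterate_add_apply, iterate_mul, iterate_fixed hL]

section NextIn
variable {σ : Equiv.Perm (Fin n)} {E : Finset (Fin n)} {x y f : Fin n}

lemma exists_pos_iter_mem (hn : 0 < n) (hy : y ∈ cycleOfF σ x)
    (hE : (E ∩ cycleOfF σ x).Nonempty) : ∃ k, 0 < k ∧ (⇑σ)^[k] y ∈ E := by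
  obtain ⟨e, he⟩ := hE
  rw [Finset.mem_inter] at he
  obtain ⟨k, hk⟩ := cycle_trans hn hy he.2
  rcases Nat.eq_zero_or_pos k with rfl | hpos
  · obtain ⟨L, hL0, _, hL⟩ := exists_period σ y hn
    exact ⟨L, hL0, by rw [hL]; rw [show (⇑σ)^[0] y = y from rfl] at hk; rw [hk]; exact he.1⟩
  · exact ⟨k, hpos, hk ▸ he.1⟩

lemma nextIn_mem (h : ∃ k, 0 < k ∧ (⇑σ)^[k] y ∈ E) : nextIn σ E y ∈ E := by
  rw [nextIn, dif_pos h]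
  exact (Nat.find_spec h).2

lemma nextIn_exists_iter (σ : Equiv.Perm (Fin n)) (E : Finset (Fin n)) (y : Fin n) :
    ∃ k, nextIn σ E y = (⇑σ)^[k] y := by
  rw [nextIn]
  split
  · exact ⟨_, rfl⟩
  · exact ⟨0, rfl⟩

lemma nextIn_mem_cycle (hn : 0 < n) (hy : y ∈ cycleOfF σ x) :
    nextIn σ E y ∈ cycleOfF σ x := by
  obtain ⟨k, hk⟩ := nextIn_exists_iter σ E y
  rw [hk]; exact cycle_closed_iter hn hy k

lemma nextIn_mem_inter (hn : 0 < n) (hy : y ∈ cycleOfF σ x)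
    (hE : (E ∩ cycleOfF σ x).Nonempty) : nextIn σ E y ∈ E ∩ cycleOfF σ x :=
  Finset.mem_inter.2 ⟨nextIn_mem (exists_pos_iter_mem hn hy hE), nextIn_mem_cycle hn hy⟩

lemma nextIn_surjOn (hn : 0 < n) (hf : f ∈ E ∩ cycleOfF σ x) :
    ∃ p ∈ E ∩ cycleOfF σ x, nextIn σ E p = f := by
  rw [Finset.mem_inter] at hf
  obtain ⟨hfE, hfC⟩ := hf
  obtain ⟨L, hL0, _, hL⟩ := exists_period σ f hn
  have h' : ∃ k, 0 < k ∧ (⇑σ⁻¹)^[k] f ∈ E :=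
    ⟨L, hL0, by rw [show (⇑σ⁻¹)^[L] f = f by conv_lhs => rw [← hL, inv_iter_iter]]; exact hfE⟩
  set j := Nat.find h' with hj
  have hj0 : 0 < j := (Nat.find_spec h').1
  set p := (⇑σ⁻¹)^[j] f with hp
  have hpE : p ∈ E := (Nat.find_spec h').2
  have hpC : p ∈ cycleOfF σ x := by
    rw [← cycleOfF_inv σ x hn] at hfC ⊢
    exact cycle_closed_iter hn hfC j
  have hjp : (⇑σ)^[j] p = f := iter_inv_iter σ j f
  have h'' : ∃ k, 0 < k ∧ (⇑σ)^[k] p ∈ E := ⟨j, hj0, by rw [hjp]; exact hfE⟩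
  refine ⟨p, Finset.mem_inter.2 ⟨hpE, hpC⟩, ?_⟩
  rw [nextIn, dif_pos h'']
  set d := Nat.find h'' with hd
  have hd0 : 0 < d := (Nat.find_spec h'').1
  have hdj : d ≤ j := Nat.find_le ⟨hj0, by rw [hjp]; exact hfE⟩
  rcases eq_or_lt_of_le hdj with heq | hlt
  · rw [heq, hjp]
  · exfalso
    have h1 : (⇑σ)^[d] p = (⇑σ⁻¹)^[j - d] f := by
      apply iter_injective σ (j - d)
      rw [← iterate_add_apply, show j - d + d = j by omega, hjp, iter_inv_iter]
    have h2 : (⇑σ⁻¹)^[j - d] f ∈ E := h1 ▸ (Nat.find_spec h'').2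
    exact Nat.find_min h' (show j - d < j by omega) ⟨by omega, h2⟩
end NextIn

section NextIn2
variable {σ : Equiv.Perm (Fin n)} {E : Finset (Fin n)} {x y f : Fin n}

lemma nextIn_injOn (hn : 0 < n) : ∀ p₁ ∈ E ∩ cycleOfF σ x, ∀ p₂ ∈ E ∩ cycleOfF σ x,
    nextIn σ E p₁ = nextIn σ E p₂ → p₁ = p₂ := by
  intro p₁ hp₁ p₂ hp₂ heq
  have hE : (E ∩ cycleOfF σ x).Nonempty := ⟨p₁, hp₁⟩
  have maps : ∀ a (ha : a ∈ E ∩ cycleOfF σ x),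
      (fun a (_ : a ∈ E ∩ cycleOfF σ x) => nextIn σ E a) a ha ∈ E ∩ cycleOfF σ x :=
    fun a ha => nextIn_mem_inter hn (Finset.mem_inter.1 ha).2 hE
  have surj : ∀ c ∈ E ∩ cycleOfF σ x, ∃ a ha,
      (fun a (_ : a ∈ E ∩ cycleOfF σ x) => nextIn σ E a) a ha = c := by
    intro c hc
    obtain ⟨p, hp, hpc⟩ := nextIn_surjOn hn hc
    exact ⟨p, hp, hpc⟩
  exact Finset.inj_on_of_surj_on_of_card_le _ maps surj le_rfl hp₁ hp₂ heq

lemma nextIn_iter_mem (hn : 0 < n) (hE : (E ∩ cycleOfF σ x).Nonempty)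
    (hy : y ∈ E ∩ cycleOfF σ x) (k : ℕ) : (nextIn σ E)^[k] y ∈ E ∩ cycleOfF σ x := by
  induction k with
  | zero => exact hy
  | succ m ih =>
    rw [iterate_succ_apply']
    exact nextIn_mem_inter hn (Finset.mem_inter.1 ih).2 hE

lemma nextIn_iter_injOn (hn : 0 < n) (hE : (E ∩ cycleOfF σ x).Nonempty) (k : ℕ) :
    ∀ p₁ ∈ E ∩ cycleOfF σ x, ∀ p₂ ∈ E ∩ cycleOfF σ x,
    (nextIn σ E)^[k] p₁ = (nextIn σ E)^[k] p₂ → p₁ = p₂ := by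
  induction k with
  | zero => intro p₁ _ p₂ _ h; exact h
  | succ m ih =>
    intro p₁ hp₁ p₂ hp₂ h
    rw [iterate_succ_apply', iterate_succ_apply'] at h
    exact ih p₁ hp₁ p₂ hp₂
      (nextIn_injOn hn _ (nextIn_iter_mem hn hE hp₁ m) _ (nextIn_iter_mem hn hE hp₂ m) h)

lemma nextIn_return (hn : 0 < n) (hy : y ∈ E ∩ cycleOfF σ x) :
    ∃ k, 0 < k ∧ k ≤ (E ∩ cycleOfF σ x).card ∧ (nextIn σ E)^[k] y = y := by
  have hE : (E ∩ cycleOfF σ x).Nonempty := ⟨y, hy⟩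
  set c := (E ∩ cycleOfF σ x).card with hc
  have hmaps : ∀ a ∈ Finset.range (c + 1), (nextIn σ E)^[a] y ∈ E ∩ cycleOfF σ x :=
    fun a _ => nextIn_iter_mem hn hE hy a
  obtain ⟨a, ha, b, hb, hab, heq⟩ :=
    Finset.exists_ne_map_eq_of_card_lt_of_maps_to (by simp [hc]) hmaps
  rw [Finset.mem_range] at ha hb
  rcases lt_or_gt_of_ne hab with h | h
  · refine ⟨b - a, by omega, by omega, ?_⟩
    apply nextIn_iter_injOn hn hE a _ (nextIn_iter_mem hn hE hy _) _ hy
    rw [← iterate_add_apply, show a + (b - a) = b by omega]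
    exact heq.symm
  · refine ⟨a - b, by omega, by omega, ?_⟩
    apply nextIn_iter_injOn hn hE b _ (nextIn_iter_mem hn hE hy _) _ hy
    rw [← iterate_add_apply, show b + (a - b) = a by omega]
    exact heq

lemma nextIn_reaches (hn : 0 < n) (hyE : y ∈ E) (t : ℕ) (ht : (⇑σ)^[t] y ∈ E) :
    ∃ j, (nextIn σ E)^[j] y = (⇑σ)^[t] y := by
  induction t using Nat.strong_induction_on with
  | _ t IH =>
    rcases Nat.eq_zero_or_pos t with rfl | htpos
    · exact ⟨0, rfl⟩
    · set P := fun s => (⇑σ)^[s] y ∈ E with hP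
      set t' := Nat.findGreatest P (t - 1) with ht'
      have hPt' : P t' := Nat.findGreatest_spec (Nat.zero_le _) (show P 0 from hyE)
      have ht'lt : t' < t := by
        have := Nat.findGreatest_le (P := P) (t - 1)
        omega
      obtain ⟨j', hj'⟩ := IH t' ht'lt hPt'
      have hex : ∃ k, 0 < k ∧ (⇑σ)^[k] ((⇑σ)^[t'] y) ∈ E := by
        refine ⟨t - t', by omega, ?_⟩
        rw [← iterate_add_apply, show t - t' + t' = t by omega]
        exact ht
      have hfind : Nat.find hex = t - t' := by
        have h1 : Nat.find hex ≤ t - t' := Nat.find_le ⟨by omega, by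
          rw [← iterate_add_apply, show t - t' + t' = t by omega]; exact ht⟩
        rcases eq_or_lt_of_le h1 with h | h
        · exact h
        · exfalso
          obtain ⟨hd0, hdE⟩ := Nat.find_spec hex
          set d := Nat.find hex
          rw [← iterate_add_apply] at hdE
          have : d + t' ≤ Nat.findGreatest P (t - 1) :=
            Nat.le_findGreatest (by omega) hdE
          omega
      refine ⟨j' + 1, ?_⟩
      rw [iterate_succ_apply', hj', nextIn, dif_pos hex, hfind,
        ← iterate_add_apply, show t - t' + t' = t by omega]

lemma nextIn_card_le (hn : 0 < n) (hy : y ∈ E ∩ cycleOfF σ x) {k : ℕ} (hk : 0 < k)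
    (hret : (nextIn σ E)^[k] y = y) : (E ∩ cycleOfF σ x).card ≤ k := by
  have hsub : E ∩ cycleOfF σ x ⊆ (Finset.range k).image fun j => (nextIn σ E)^[j] y := by
    intro f hf
    rw [Finset.mem_inter] at hf hy
    obtain ⟨t, htf⟩ := cycle_trans hn hy.2 hf.2
    obtain ⟨j, hj⟩ := nextIn_reaches hn hy.1 t (htf ▸ hf.1)
    rw [Finset.mem_image]
    exact ⟨j % k, Finset.mem_range.2 (Nat.mod_lt _ hk), by
      rw [← iterate_mod hret j, hj, htf]⟩
  calc (E ∩ cycleOfF σ x).card ≤ _ := Finset.card_le_card hsub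
  _ ≤ k := le_trans Finset.card_image_le (by simp)
end NextIn2

section Level
variable {π : Equiv.Perm (Fin n)} {b : ℕ} {x : Fin n} {r : ℕ}

lemma mem_level_succ_iff' {i : Fin n} : i ∈ level π b (r + 1) ↔
    i ∈ level π b r ∧
      (∀ k ∈ Finset.Icc 1 b, i < (nextIn π (level π b r))^[k] i) ∧
      (∀ k ∈ Finset.Icc 1 b, i < (nextIn π⁻¹ (level π b r))^[k] i) := by
  simp only [level, Finset.mem_filter]

lemma level_succ_subset : level π b (r + 1) ⊆ level π b r := by
  intro i hi
  exact (mem_level_succ_iff'.1 hi).1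

lemma level_mono {r s : ℕ} (h : r ≤ s) : level π b s ⊆ level π b r := by
  induction s with
  | zero => simp_all
  | succ m ih =>
    rcases Nat.eq_or_lt_of_le h with rfl | h'
    · exact Finset.Subset.refl _
    · exact Finset.Subset.trans level_succ_subset (ih (by omega))

lemma mem_level_succ_iff {i : Fin n} : i ∈ level π b (r + 1) ↔
    i ∈ level π b r ∧
      (∀ k ∈ Finset.Icc 1 b, i < (nextIn π (level π b r))^[k] i) ∧
      (∀ k ∈ Finset.Icc 1 b, i < (nextIn π⁻¹ (level π b r))^[k] i) := mem_level_succ_iff'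

/-- B2: if the next level still meets the cycle, the current level has > b elements there. -/
lemma card_gt_of_level_succ_nonempty (hn : 0 < n) (hb : 1 ≤ b)
    (h : (level π b (r + 1) ∩ cycleOfF π x).Nonempty) :
    b < (level π b r ∩ cycleOfF π x).card := by
  obtain ⟨e, he⟩ := h
  rw [Finset.mem_inter, mem_level_succ_iff] at he
  obtain ⟨⟨heL, hfwd, _⟩, heC⟩ := he
  by_contra hle
  push_neg at hle
  have heS : e ∈ level π b r ∩ cycleOfF π x := Finset.mem_inter.2 ⟨heL, heC⟩
  obtain ⟨k, hk0, hkle, hret⟩ := nextIn_return hn heS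
  have := hfwd k (Finset.mem_Icc.2 ⟨hk0, le_trans hkle hle⟩)
  rw [hret] at this
  exact lt_irrefl _ this

/-- B1: the cycle-minimum survives to the next level when the level is still large. -/
lemma min_mem_level_succ (hn : 0 < n) (hb : 1 ≤ b) {m₀ : Fin n}
    (hm₀C : m₀ ∈ cycleOfF π x) (hmin : ∀ y ∈ cycleOfF π x, m₀ ≤ y)
    (hm₀ : m₀ ∈ level π b r) (hcard : b < (level π b r ∩ cycleOfF π x).card) :
    m₀ ∈ level π b (r + 1) := by
  have hE : (level π b r ∩ cycleOfF π x).Nonempty := by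
    rw [← Finset.card_pos]; omega
  have hm₀S : m₀ ∈ level π b r ∩ cycleOfF π x := Finset.mem_inter.2 ⟨hm₀, hm₀C⟩
  rw [mem_level_succ_iff]
  refine ⟨hm₀, ?_, ?_⟩
  · intro k hk
    rw [Finset.mem_Icc] at hk
    have hmem := nextIn_iter_mem hn hE hm₀S k
    rw [Finset.mem_inter] at hmem
    refine lt_of_le_of_ne (hmin _ hmem.2) fun heq => ?_
    have := nextIn_card_le hn hm₀S (k := k) (by omega) heq.symm
    omega
  · intro k hk
    rw [Finset.mem_Icc] at hk
    have hCinv : cycleOfF π⁻¹ x = cycleOfF π x := cycleOfF_inv π x hn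
    have hE' : (level π b r ∩ cycleOfF π⁻¹ x).Nonempty := by rw [hCinv]; exact hE
    have hm₀S' : m₀ ∈ level π b r ∩ cycleOfF π⁻¹ x := by rw [hCinv]; exact hm₀S
    have hmem := nextIn_iter_mem hn hE' hm₀S' k
    rw [Finset.mem_inter, hCinv] at hmem
    refine lt_of_le_of_ne (hmin _ hmem.2) fun heq => ?_
    have := nextIn_card_le hn hm₀S' (k := k) (by omega) heq.symm
    rw [hCinv] at this
    omega

/-- strict decrease of level cards along the cycle -/
lemma level_card_strict (hn : 0 < n) (hb : 1 ≤ b)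
    (h : (level π b r ∩ cycleOfF π x).Nonempty) :
    (level π b (r + 1) ∩ cycleOfF π x).card < (level π b r ∩ cycleOfF π x).card := by
  set S := level π b r ∩ cycleOfF π x with hS
  set M := S.max' h with hM
  have hMS : M ∈ S := S.max'_mem h
  have hMnot : M ∉ level π b (r + 1) := by
    intro hmem
    rw [mem_level_succ_iff] at hmem
    obtain ⟨hML, hfwd, _⟩ := hmem
    have h1 := hfwd 1 (Finset.mem_Icc.2 ⟨le_refl 1, hb⟩)
    rw [Finset.mem_inter] at hMS
    have := nextIn_iter_mem hn h (Finset.mem_inter.2 ⟨hML, hMS.2⟩) 1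
    exact absurd (S.le_max' _ this) (not_le.2 h1)
  have hsub : level π b (r + 1) ∩ cycleOfF π x ⊆ S.erase M := by
    intro z hz
    rw [Finset.mem_inter] at hz
    refine Finset.mem_erase.2 ⟨fun h' => hMnot (h' ▸ hz.1), ?_⟩
    exact Finset.mem_inter.2 ⟨level_succ_subset hz.1, hz.2⟩
  calc (level π b (r + 1) ∩ cycleOfF π x).card ≤ (S.erase M).card := Finset.card_le_card hsub
  _ < S.card := Finset.card_erase_lt_of_mem hMS

lemma exists_small_level (hn : 0 < n) (hb : 1 ≤ b) :
    ∃ r, (level π b r ∩ cycleOfF π x).card ≤ b := by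
  by_contra hcon
  push_neg at hcon
  have key : ∀ r, (level π b r ∩ cycleOfF π x).card + r ≤
      (level π b 0 ∩ cycleOfF π x).card := by
    intro r
    induction r with
    | zero => omega
    | succ m ih =>
      have hne : (level π b m ∩ cycleOfF π x).Nonempty := by
        rw [← Finset.card_pos]
        have := hcon m; omega
      have := level_card_strict hn hb (x := x) (r := m) hne
      omega
  have := key ((level π b 0 ∩ cycleOfF π x).card + 1)
  omega
end Level


/-- `iSeq π b i k` is the element `i_{k+1}` of the `b`-staircase from `i`:
`i_1 = i` and `i_{k+1} = π_k^b(i_k)`. -/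
noncomputable def iSeq (π : Equiv.Perm (Fin n)) (b : ℕ) (i : Fin n) : ℕ → Fin n
  | 0 => i
  | k + 1 => stepB π b (level π b k) (iSeq π b i k)

/-- `jSeq π b r m q` is the element `j_{r+1-q}` of the descending part of the `b`-staircase of
size `r` with middle `m`: `j_{r+1} = m` and `j_k = π_k^b(j_{k+1})`. -/
noncomputable def jSeq (π : Equiv.Perm (Fin n)) (b : ℕ) (r : ℕ) (m : Fin n) : ℕ → Fin n
  | 0 => m
  | q + 1 => stepB π b (level π b (r - (q + 1))) (jSeq π b r m q)

/-- The sequence `(i = i_1, …, i_{r+1} = m = j_{r+1}, j_r, …, j_1 = i')` is a `b`-staircase of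
size `r` from `i`: `i_k, j_k ∈ E_k` for all `k ∈ [r+1]`. -/
def IsStaircase (π : Equiv.Perm (Fin n)) (b r : ℕ) (i : Fin n) : Prop :=
  ∀ k ≤ r, iSeq π b i k ∈ level π b k ∧
    jSeq π b r (iSeq π b i r) k ∈ level π b (r - k)

/-- An almost `b`-staircase of size `r` from `i`: membership `i_k, j_k ∈ E_k` is required only
for `k ∈ [r]`. -/
def IsAlmost (π : Equiv.Perm (Fin n)) (b r : ℕ) (i : Fin n) : Prop :=
  (∀ k < r, iSeq π b i k ∈ level π b k) ∧
  (∀ q, 1 ≤ q → q ≤ r → jSeq π b r (iSeq π b i r) q ∈ level π b (r - q))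

/-- The `b`-staircase of size `r` from `i` is the best `b`-staircase from `i`: there is no
proper (i.e. with `|E_{r+1} ∩ C| > b`, where `C` is the cycle of `i`) almost `b`-staircase of
size `r+1` from `i`. -/
def IsBest (π : Equiv.Perm (Fin n)) (b r : ℕ) (i : Fin n) : Prop :=
  IsStaircase π b r i ∧
    ¬ (IsAlmost π b (r + 1) i ∧ b < ((level π b r) ∩ cycleOfF π i).card)

section Seqs
variable {π : Equiv.Perm (Fin n)} {b : ℕ} {x y i : Fin n} {E : Finset (Fin n)}

lemma stepB_mem_cycle (hn : 0 < n) (hy : y ∈ cycleOfF π x) :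
    stepB π b E y ∈ cycleOfF π x := by
  rw [stepB]
  induction b with
  | zero => exact hy
  | succ m ih => rw [iterate_succ_apply']; exact nextIn_mem_cycle hn ih

lemma stepB_mem_inter (hn : 0 < n) (hb : 1 ≤ b) (hy : y ∈ cycleOfF π x)
    (hE : (E ∩ cycleOfF π x).Nonempty) : stepB π b E y ∈ E ∩ cycleOfF π x := by
  rw [stepB, show b = (b - 1) + 1 by omega, iterate_add_apply]
  exact nextIn_iter_mem hn hE (nextIn_mem_inter hn hy hE) (b - 1)

lemma stepB_surjOn (hn : 0 < n) (hf : y ∈ E ∩ cycleOfF π x) :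
    ∃ p ∈ E ∩ cycleOfF π x, stepB π b E p = y := by
  induction b with
  | zero => exact ⟨y, hf, rfl⟩
  | succ m ih =>
    obtain ⟨p, hp, hpf⟩ := ih
    obtain ⟨q, hq, hqp⟩ := nextIn_surjOn hn hp
    refine ⟨q, hq, ?_⟩
    rw [stepB, iterate_succ_apply, hqp, ← stepB, hpf]

lemma stepB_injOn (hn : 0 < n) (hE : (E ∩ cycleOfF π x).Nonempty) :
    ∀ p₁ ∈ E ∩ cycleOfF π x, ∀ p₂ ∈ E ∩ cycleOfF π x,
    stepB π b E p₁ = stepB π b E p₂ → p₁ = p₂ := by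
  intro p₁ hp₁ p₂ hp₂ h
  exact nextIn_iter_injOn hn hE b p₁ hp₁ p₂ hp₂ h

lemma iSeq_mem_cycle (hn : 0 < n) (hi : i ∈ cycleOfF π x) (k : ℕ) :
    iSeq π b i k ∈ cycleOfF π x := by
  induction k with
  | zero => exact hi
  | succ m ih => rw [iSeq]; exact stepB_mem_cycle hn ih

lemma jSeq_mem_cycle (hn : 0 < n) {m : Fin n} (hm : m ∈ cycleOfF π x) (r q : ℕ) :
    jSeq π b r m q ∈ cycleOfF π x := by
  induction q with
  | zero => exact hm
  | succ t ih => rw [jSeq]; exact stepB_mem_cycle hn ih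

/-- descending part lands automatically. -/
lemma jSeq_mem_level (hn : 0 < n) (hb : 1 ≤ b) {m : Fin n} {r s : ℕ}
    (hm : m ∈ level π b s ∩ cycleOfF π x) (hs : ∀ q, r - q ≤ s ∨ q = 0) (q : ℕ) :
    jSeq π b r m q ∈ level π b (r - q) ∩ cycleOfF π x ∨ q = 0 := by
  induction q with
  | zero => right; rfl
  | succ t ih =>
    left
    have hmC : jSeq π b r m t ∈ cycleOfF π x :=
      jSeq_mem_cycle hn (Finset.mem_inter.1 hm).2 r t
    have hsub : level π b s ⊆ level π b (r - (t+1)) :=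
      level_mono (by have := hs (t+1); omega)
    have hne : (level π b (r - (t+1)) ∩ cycleOfF π x).Nonempty :=
      ⟨m, Finset.mem_inter.2 ⟨hsub (Finset.mem_inter.1 hm).1, (Finset.mem_inter.1 hm).2⟩⟩
    rw [jSeq]
    exact stepB_mem_inter hn hb hmC hne

/-- D1: the ascending conditions imply the full staircase. -/
lemma staircase_of_iSeq (hn : 0 < n) (hb : 1 ≤ b) {r : ℕ} (hi : i ∈ cycleOfF π x)
    (h : ∀ k ≤ r, iSeq π b i k ∈ level π b k) : IsStaircase π b r i := by
  intro k hk
  refine ⟨h k hk, ?_⟩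
  have hm : iSeq π b i r ∈ level π b r ∩ cycleOfF π x :=
    Finset.mem_inter.2 ⟨h r le_rfl, iSeq_mem_cycle hn hi r⟩
  rcases jSeq_mem_level hn hb hm (fun q => Or.inl (Nat.sub_le _ _)) k with hmem | rfl
  · exact (Finset.mem_inter.1 hmem).1
  · simpa [jSeq] using (Finset.mem_inter.1 hm).1

/-- D2: the ascending conditions imply the almost staircase one size up. -/
lemma almost_of_iSeq (hn : 0 < n) (hb : 1 ≤ b) {r : ℕ} (hi : i ∈ cycleOfF π x)
    (h : ∀ k ≤ r, iSeq π b i k ∈ level π b k) : IsAlmost π b (r + 1) i := by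
  constructor
  · intro k hk; exact h k (by omega)
  · intro q hq1 hq2
    have hmr : iSeq π b i r ∈ level π b r ∩ cycleOfF π x :=
      Finset.mem_inter.2 ⟨h r le_rfl, iSeq_mem_cycle hn hi r⟩
    have hm' : iSeq π b i (r + 1) ∈ level π b r ∩ cycleOfF π x := by
      rw [iSeq]
      exact stepB_mem_inter hn hb (Finset.mem_inter.1 hmr).2 ⟨_, hmr⟩
    have hs : ∀ t, (r + 1) - t ≤ r ∨ t = 0 := by intro t; omega
    rcases jSeq_mem_level hn hb hm' hs q with hmem | rfl
    · exact (Finset.mem_inter.1 hmem).1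
    · omega

/-- the ascent construction: `asc … t` is the element `q` levels below the top `R`. -/
noncomputable def asc (π : Equiv.Perm (Fin n)) (b R : ℕ) (m₀ : Fin n) : ℕ → Fin n
  | 0 => m₀
  | t + 1 =>
    if h : ∃ p, p ∈ level π b (R - (t+1)) ∩ cycleOfF π m₀ ∧
        stepB π b (level π b (R - (t+1))) p = asc π b R m₀ t then h.choose
    else asc π b R m₀ t

lemma asc_spec (hn : 0 < n) {R : ℕ} {m₀ : Fin n}
    (hm₀ : m₀ ∈ level π b R ∩ cycleOfF π m₀) :
    ∀ t ≤ R, asc π b R m₀ t ∈ level π b (R - t) ∩ cycleOfF π m₀ ∧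
      (∀ s, t = s + 1 → stepB π b (level π b (R - t)) (asc π b R m₀ t) = asc π b R m₀ s) := by
  intro t
  induction t with
  | zero => intro _; refine ⟨by simpa [asc] using hm₀, by omega⟩
  | succ u ih =>
    intro hu
    obtain ⟨ihmem, -⟩ := ih (by omega)
    have hsub : level π b (R - u) ⊆ level π b (R - (u + 1)) := level_mono (by omega)
    have hmem' : asc π b R m₀ u ∈ level π b (R - (u+1)) ∩ cycleOfF π m₀ := by
      rw [Finset.mem_inter] at ihmem ⊢
      exact ⟨hsub ihmem.1, ihmem.2⟩
    have hex : ∃ p, p ∈ level π b (R - (u+1)) ∩ cycleOfF π m₀ ∧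
        stepB π b (level π b (R - (u+1))) p = asc π b R m₀ u := by
      obtain ⟨p, hp, hps⟩ := stepB_surjOn (b := b) hn hmem'
      exact ⟨p, hp, hps⟩
    constructor
    · rw [asc, dif_pos hex]
      exact hex.choose_spec.1
    · intro s hs
      have hsu : s = u := by omega
      subst hsu
      rw [asc, dif_pos hex]
      exact hex.choose_spec.2
end Seqs


/-- Fich et al.'s (`b = 1`) notion: the staircase of size `r` from `i` is the best staircase
from `i`, where an almost staircase of size `r+1` is proper iff `i_{r+1} ≠ m'` (its middle). -/
def IsBest1 (π : Equiv.Perm (Fin n)) (r : ℕ) (i : Fin n) : Prop :=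
  IsStaircase π 1 r i ∧
    ¬ (IsAlmost π 1 (r + 1) i ∧ iSeq π 1 i r ≠ iSeq π 1 i (r + 1))

/-- On every cycle `C` of `π` there is exactly one leader: exactly one
element `i ∈ C` such that the best `b`-staircase from `i` exists and its middle
(`iSeq π b i r`) is the minimum element of `C`. -/
theorem exists_unique_leader (n b : ℕ) (hb : 1 ≤ b) (π : Equiv.Perm (Fin n))
    (x : Fin n) (C : Finset (Fin n)) (hC : C = cycleOfF π x) :
    ∃! i : Fin n, i ∈ C ∧ ∃ r, IsBest π b r i ∧ ∀ y ∈ C, iSeq π b i r ≤ y := by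
  subst hC
  rcases Nat.eq_zero_or_pos n with rfl | hn
  · exact absurd x.isLt (Nat.not_lt_zero _)
  have hxC : x ∈ cycleOfF π x := mem_cycleOfF_self π x hn
  set C := cycleOfF π x with hCdef
  have hCne : C.Nonempty := ⟨x, hxC⟩
  set m₀ := C.min' hCne with hm₀def
  have hm₀C : m₀ ∈ C := C.min'_mem hCne
  have hmin : ∀ y ∈ C, m₀ ≤ y := fun y hy => C.min'_le y hy
  have hm₀cyc : cycleOfF π m₀ = C := cycleOfF_eq_of_mem hn hm₀C
  have hex := exists_small_level (π := π) (b := b) (x := x) hn hb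
  set R := Nat.find hex with hRdef
  have hR : (level π b R ∩ C).card ≤ b := Nat.find_spec hex
  have hRmin : ∀ r < R, b < (level π b r ∩ C).card := by
    intro r hr
    have h2 := Nat.find_min hex hr
    rw [← hCdef] at h2
    omega
  have hm₀lev : ∀ r ≤ R, m₀ ∈ level π b r := by
    intro r
    induction r with
    | zero => intro _; simp [level]
    | succ u ih =>
      intro hu
      exact min_mem_level_succ hn hb hm₀C hmin (ih (by omega)) (hRmin u (by omega))
  have hm₀R : m₀ ∈ level π b R := hm₀lev R le_rfl
  have hm₀notsucc : m₀ ∉ level π b (R + 1) := by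
    intro h
    have h2 := card_gt_of_level_succ_nonempty hn hb (x := x)
      ⟨m₀, Finset.mem_inter.2 ⟨h, hm₀C⟩⟩
    rw [← hCdef] at h2
    omega
  have hm₀' : m₀ ∈ level π b R ∩ cycleOfF π m₀ := by
    rw [hm₀cyc]; exact Finset.mem_inter.2 ⟨hm₀R, hm₀C⟩
  set i₀ := asc π b R m₀ R with hi₀def
  have key : ∀ k ≤ R, iSeq π b i₀ k = asc π b R m₀ (R - k) := by
    intro k
    induction k with
    | zero => intro _; rfl
    | succ u ih =>
      intro hu
      have h2 := (asc_spec hn hm₀' (R - u) (by omega)).2 (R - (u + 1)) (by omega)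
      rw [show R - (R - u) = u by omega] at h2
      rw [iSeq, ih (by omega), h2]
  have imem : ∀ k ≤ R, iSeq π b i₀ k ∈ level π b k ∩ C := by
    intro k hk
    have := (asc_spec hn hm₀' (R - k) (by omega)).1
    rw [show R - (R - k) = k by omega, hm₀cyc] at this
    rw [key k hk]
    exact this
  have i₀C : i₀ ∈ C := by
    have := imem 0 (by omega)
    rw [show iSeq π b i₀ 0 = i₀ from rfl] at this
    exact (Finset.mem_inter.1 this).2
  have i₀cyc : cycleOfF π i₀ = C := cycleOfF_eq_of_mem hn i₀C
  have iSeqR : iSeq π b i₀ R = m₀ := by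
    rw [key R le_rfl, show R - R = 0 by omega, asc]
  have ilev : ∀ k ≤ R, iSeq π b i₀ k ∈ level π b k :=
    fun k hk => (Finset.mem_inter.1 (imem k hk)).1
  have hi₀m : i₀ ∈ cycleOfF π m₀ := by rw [hm₀cyc]; exact i₀C
  refine ⟨i₀, ⟨i₀C, R, ⟨?_, ?_⟩, ?_⟩, ?_⟩
  · exact staircase_of_iSeq hn hb hi₀m ilev
  · rintro ⟨-, hcard⟩
    rw [i₀cyc] at hcard
    omega
  · intro y hy
    rw [iSeqR]
    exact hmin y hy
  · -- uniqueness
    rintro j ⟨hjC, r, ⟨hstair, hnot⟩, hmid⟩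
    have hjcyc : cycleOfF π j = C := cycleOfF_eq_of_mem hn hjC
    have hjm : j ∈ cycleOfF π m₀ := by rw [hm₀cyc]; exact hjC
    have hjkC : ∀ k, iSeq π b j k ∈ C := fun k => iSeq_mem_cycle hn hjC k
    have hmideq : iSeq π b j r = m₀ :=
      le_antisymm (hmid m₀ hm₀C) (hmin _ (hjkC r))
    have hlevels : ∀ k ≤ r, iSeq π b j k ∈ level π b k := fun k hk => (hstair k hk).1
    have halmost : IsAlmost π b (r + 1) j := almost_of_iSeq hn hb hjC hlevels
    have hcard : (level π b r ∩ C).card ≤ b := by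
      by_contra hcon
      push_neg at hcon
      exact hnot ⟨halmost, by rw [hjcyc]; exact hcon⟩
    have hRr : R ≤ r := Nat.find_min' hex (by rw [← hCdef]; exact hcard)
    have hrR : r = R := by
      rcases Nat.eq_or_lt_of_le hRr with h | h
      · omega
      · exfalso
        have : m₀ ∈ level π b (R + 1) := by
          have := hmideq ▸ hlevels r le_rfl
          exact level_mono (by omega) this
        exact hm₀notsucc this
    subst hrR
    have claim : ∀ t ≤ R, iSeq π b j (R - t) = iSeq π b i₀ (R - t) := by
      intro t
      induction t with
      | zero =>
        intro _
        rw [show R - 0 = R from rfl, hmideq, iSeqR]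
      | succ u ih =>
        intro hu
        have ihe := ih (by omega)
        set k := R - (u + 1) with hk
        have hk1 : k + 1 = R - u := by omega
        have hkR : k ≤ R := by omega
        have h1 : iSeq π b j k ∈ level π b k ∩ C :=
          Finset.mem_inter.2 ⟨hlevels k hkR, hjkC k⟩
        have h2 : iSeq π b i₀ k ∈ level π b k ∩ C := imem k hkR
        have hne : (level π b k ∩ C).Nonempty := ⟨_, h1⟩
        have ihe' : iSeq π b j (k + 1) = iSeq π b i₀ (k + 1) := by rw [hk1]; exact ihe
        have e1 : iSeq π b j (k + 1) = stepB π b (level π b k) (iSeq π b j k) := rfl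
        have e2 : iSeq π b i₀ (k + 1) = stepB π b (level π b k) (iSeq π b i₀ k) := rfl
        have heq : stepB π b (level π b k) (iSeq π b j k)
            = stepB π b (level π b k) (iSeq π b i₀ k) := by
          rw [← e1, ← e2]
          exact ihe'
        exact stepB_injOn hn hne _ h1 _ h2 heq
    have := claim R le_rfl
    rw [show R - R = 0 by omega] at this
    exact this
end

section
/- Let C be a cycle of π, let r ≥ 1, and let m ∈ E_{r+1} ∩ C with |E_{r+1} ∩ C| ≥ 2. Then the element π_1(π_2(…(π_r(m))…)) appears strictly before π_{r+1}(m) when traversing the cycle from m along π; that is, len(m, π_1(π_2(…(π_r(m))…))) < len(m, π_{r+1}(m)), where len(u, w) = min{k > 0 : π^k(u) = w}. -/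
attribute [local instance] Classical.propDecidable

variable {n : ℕ}

/-- `chainDown π b r m = π_1(π_2(…(π_r(m))…))` (with `π_{k} = nextIn π (level π b (k-1))`). -/
noncomputable def chainDown (π : Equiv.Perm (Fin n)) (b : ℕ) : ℕ → Fin n → Fin n
  | 0, m => m
  | r + 1, m => chainDown π b r (nextIn π (level π b r) m)

/-- `len(u,w) = min{k > 0 : π^k(u) = w}` (0 if unreachable). -/
noncomputable def lenTo (π : Equiv.Perm (Fin n)) (u w : Fin n) : ℕ :=
  if h : ∃ k, 0 < k ∧ (⇑π)^[k] u = w then Nat.find h else 0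


lemma nextIn_spec' {π : Equiv.Perm (Fin n)} {E : Finset (Fin n)} {x : Fin n}
    (h : ∃ k, 0 < k ∧ (⇑π)^[k] x ∈ E) :
    ∃ K, 0 < K ∧ (⇑π)^[K] x ∈ E ∧ (∀ k, 0 < k → k < K → (⇑π)^[k] x ∉ E) ∧
      nextIn π E x = (⇑π)^[K] x := by
  refine ⟨Nat.find h, (Nat.find_spec h).1, (Nat.find_spec h).2, ?_, ?_⟩
  · intro k hk hkK hE; exact Nat.find_min h hkK ⟨hk, hE⟩
  · rw [nextIn, dif_pos h]

lemma nextIn_eq' {π : Equiv.Perm (Fin n)} {E : Finset (Fin n)} {x : Fin n} {K : ℕ}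
    (hK : 0 < K) (hmem : (⇑π)^[K] x ∈ E) (hmin : ∀ k, 0 < k → k < K → (⇑π)^[k] x ∉ E) :
    nextIn π E x = (⇑π)^[K] x := by
  have h : ∃ k, 0 < k ∧ (⇑π)^[k] x ∈ E := ⟨K, hK, hmem⟩
  obtain ⟨K', hK', hmem', hmin', heq⟩ := nextIn_spec' h
  have hKK : K' = K := by
    rcases lt_trichotomy K' K with h1 | h1 | h1
    · exact absurd hmem' (hmin K' hK' h1)
    · exact h1
    · exact absurd hmem (hmin' K hK h1)
  rw [heq, hKK]

lemma mem_level_succ' {π : Equiv.Perm (Fin n)} {s : ℕ} {i : Fin n}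
    (hi : i ∈ level π 1 (s + 1)) :
    i ∈ level π 1 s ∧ i < nextIn π (level π 1 s) i ∧ i < nextIn π⁻¹ (level π 1 s) i := by
  simp only [level, Finset.mem_filter] at hi
  refine ⟨hi.1, ?_, ?_⟩
  · have := hi.2.1 1 (by simp); simpa using this
  · have := hi.2.2 1 (by simp); simpa using this

lemma inv_iter' {π : Equiv.Perm (Fin n)} {m y : Fin n} {L : ℕ} (hLy : (⇑π)^[L] m = y) :
    ∀ k, k ≤ L → (⇑π⁻¹)^[k] y = (⇑π)^[L - k] m := by
  intro k
  induction k with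
  | zero => intro _; simpa using hLy.symm
  | succ k ih =>
    intro hk
    rw [Function.iterate_succ_apply', ih (by omega),
      show L - k = (L - (k + 1)) + 1 by omega, Function.iterate_succ_apply']
    simp

lemma level_succ_subset' {π : Equiv.Perm (Fin n)} {s : ℕ} :
    level π 1 (s + 1) ⊆ level π 1 s := fun _ hi => (mem_level_succ' hi).1

lemma step_lemma' (π : Equiv.Perm (Fin n)) (m y : Fin n) (L : ℕ)
    (hLy : (⇑π)^[L] m = y)
    (hLmin : ∀ k, 0 < k → k < L → (⇑π)^[k] m ≠ y)
    (s : ℕ) (w : Fin n) (j : ℕ)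
    (hw : w ∈ level π 1 (s + 1)) (hy : y ∈ level π 1 (s + 1))
    (hj : j < L) (hjw : (⇑π)^[j] m = w) :
    ∃ j', j < j' ∧ j' < L ∧ (⇑π)^[j'] m = nextIn π (level π 1 s) w ∧
      nextIn π (level π 1 s) w ∈ level π 1 s := by
  obtain ⟨hw0, hwlt, -⟩ := mem_level_succ' hw
  obtain ⟨hy0, -, hylt⟩ := mem_level_succ' hy
  have hwy : (⇑π)^[L - j] w = y := by
    rw [← hjw, ← Function.iterate_add_apply, Nat.sub_add_cancel hj.le, hLy]
  have h : ∃ k, 0 < k ∧ (⇑π)^[k] w ∈ level π 1 s :=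
    ⟨L - j, by omega, by rw [hwy]; exact hy0⟩
  obtain ⟨K, hK, hKmem, hKmin, hKeq⟩ := nextIn_spec' h
  have hKle : K ≤ L - j := by
    by_contra hc
    exact hKmin (L - j) (by omega) (by omega) (by rw [hwy]; exact hy0)
  have hKne : (⇑π)^[K] w ≠ y := by
    intro hvy
    have hKeq' : K = L - j := by
      by_contra hne
      exact hLmin (j + K) (by omega) (by omega)
        (by rw [Nat.add_comm, Function.iterate_add_apply, hjw, hvy])
    have hinv : nextIn π⁻¹ (level π 1 s) y = w := by
      have h1 : (⇑π⁻¹)^[K] y = w := by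
        rw [inv_iter' hLy K (by omega), show L - K = j by omega, hjw]
      rw [← h1]
      refine nextIn_eq' hK (by rw [h1]; exact hw0) ?_
      intro k hk hkK
      have h2 : (⇑π⁻¹)^[k] y = (⇑π)^[K - k] w := by
        rw [inv_iter' hLy k (by omega), show L - k = (K - k) + j by omega,
          Function.iterate_add_apply, hjw]
      rw [h2]
      exact hKmin (K - k) (by omega) (by omega)
    have hyw : y < w := by rw [← hinv]; exact hylt
    have hwyv : w < y := by rw [← hvy, ← hKeq]; exact hwlt
    exact absurd hyw (lt_asymm hwyv)
  have hKlt : K < L - j := lt_of_le_of_ne hKle (fun he => hKne (by rw [he]; exact hwy))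
  refine ⟨j + K, by omega, by omega, ?_, by rw [hKeq]; exact hKmem⟩
  rw [hKeq, Nat.add_comm j K, Function.iterate_add_apply, hjw]

lemma aux_lemma' (π : Equiv.Perm (Fin n)) (m y : Fin n) (L : ℕ)
    (hLy : (⇑π)^[L] m = y)
    (hLmin : ∀ k, 0 < k → k < L → (⇑π)^[k] m ≠ y) :
    ∀ s w j, w ∈ level π 1 (s + 1) → y ∈ level π 1 (s + 1) → j < L → (⇑π)^[j] m = w →
      ∃ j', j < j' ∧ j' < L ∧ (⇑π)^[j'] m = chainDown π 1 (s + 1) w := by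
  intro s
  induction s with
  | zero =>
    intro w j hw hy hj hjw
    obtain ⟨j', h1, h2, h3, -⟩ := step_lemma' π m y L hLy hLmin 0 w j hw hy hj hjw
    exact ⟨j', h1, h2, by simpa [chainDown] using h3⟩
  | succ s ih =>
    intro w j hw hy hj hjw
    obtain ⟨j₁, h1, h2, h3, h4⟩ := step_lemma' π m y L hLy hLmin (s + 1) w j hw hy hj hjw
    obtain ⟨j', g1, g2, g3⟩ := ih (nextIn π (level π 1 (s + 1)) w) j₁ h4
      (level_succ_subset' hy) h2 h3
    exact ⟨j', lt_trans h1 g1, g2, by simpa [chainDown] using g3⟩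


/-- (Fich et al., `b = 1`; `E_{r+1} = level π 1 r`, 0-indexed.)
Let `C` be a cycle of `π`, `r ≥ 1`, and `m ∈ E_{r+1} ∩ C` with `|E_{r+1} ∩ C| ≥ 2`.  Then
`π_1(π_2(…(π_r(m))…))` appears strictly before `π_{r+1}(m)` when traversing the cycle from `m`
along `π`: `len(m, π_1(π_2(…(π_r(m))…))) < len(m, π_{r+1}(m))`. -/
theorem nested_elbows (n : ℕ) (π : Equiv.Perm (Fin n)) (m : Fin n) (r : ℕ) (hr : 1 ≤ r)
    (hm : m ∈ level π 1 r)
    (hcard : 2 ≤ ((level π 1 r) ∩ cycleOfF π m).card) :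
    lenTo π m (chainDown π 1 r m) < lenTo π m (nextIn π (level π 1 r) m) := by
  have h : ∃ k, 0 < k ∧ (⇑π)^[k] m ∈ level π 1 r := by
    refine ⟨orderOf π, orderOf_pos π, ?_⟩
    have : (⇑π)^[orderOf π] m = m := by
      rw [← Equiv.Perm.coe_pow, pow_orderOf_eq_one]; rfl
    rw [this]; exact hm
  obtain ⟨L, hL, hLmem, hLmin, hLeq⟩ := nextIn_spec' h
  set y := nextIn π (level π 1 r) m with hydef
  have hLy : (⇑π)^[L] m = y := hLeq.symm
  have hy0 : y ∈ level π 1 r := by rw [← hLy]; exact hLmem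
  have hLminy : ∀ k, 0 < k → k < L → (⇑π)^[k] m ≠ y := fun k hk hkL he =>
    hLmin k hk hkL (by rw [he]; exact hy0)
  obtain ⟨r', rfl⟩ : ∃ r', r = r' + 1 := ⟨r - 1, by omega⟩
  obtain ⟨j', hj0, hjL, hjcd⟩ := aux_lemma' π m y L hLy hLminy r' m 0 hm hy0 hL rfl
  have h2 : ∃ k, 0 < k ∧ (⇑π)^[k] m = y := ⟨L, hL, hLy⟩
  have hlenY : lenTo π m y = L := by
    rw [lenTo, dif_pos h2]
    have hle : Nat.find h2 ≤ L := Nat.find_le ⟨hL, hLy⟩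
    have hsp := Nat.find_spec h2
    rcases lt_or_eq_of_le hle with hlt | he
    · exact absurd hsp.2 (hLminy _ hsp.1 hlt)
    · exact he
  have h3 : ∃ k, 0 < k ∧ (⇑π)^[k] m = chainDown π 1 (r' + 1) m := ⟨j', hj0, hjcd⟩
  have hlenC : lenTo π m (chainDown π 1 (r' + 1) m) ≤ j' := by
    rw [lenTo, dif_pos h3]; exact Nat.find_le ⟨hj0, hjcd⟩
  calc lenTo π m (chainDown π 1 (r' + 1) m) ≤ j' := hlenC
    _ < L := hjL
    _ = lenTo π m y := hlenY.symm
end
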